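/- For spr-expressions e, g, h with γ_Σ(e, g, h) ≄ 0 in the syntactic pomset automaton: g ≺_Σ e, and moreover either h ≺_Σ e or e ≃ f† for some expression f. -/

import Mathlib

open Classical

noncomputable section

/-- Series-parallel rational expressions. -/
inductive SPR (A : Type) : Type where
  | zero : SPR A
  | one : SPR A
  | var (a : A) : SPR A
  | add (e f : SPR A) : SPR A
  | seq (e f : SPR A) : SPR A
  | par (e f : SPR A) : SPR A
  | star (e : SPR A) : SPR A
  | dagger (e : SPR A) : SPR A

/-- The set ℱ of expressions accepting the empty pomset. -/
inductive Null {A : Type} : SPR A → Prop where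
  | one : Null SPR.one
  | addL {e : SPR A} (f : SPR A) : Null e → Null (SPR.add e f)
  | addR {e : SPR A} (f : SPR A) : Null e → Null (SPR.add f e)
  | seq {e f : SPR A} : Null e → Null f → Null (SPR.seq e f)
  | par {e f : SPR A} : Null e → Null f → Null (SPR.par e f)
  | star (e : SPR A) : Null (SPR.star e)
  | dagger (e : SPR A) : Null (SPR.dagger e)

/-- The syntactic congruence ≃: ACI of + and left-distributivity of + over ·. -/
inductive cong {A : Type} : SPR A → SPR A → Prop where
  | add_zero (e : SPR A) : cong (SPR.add e SPR.zero) e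
  | add_idem (e : SPR A) : cong (SPR.add e e) e
  | add_comm (e f : SPR A) : cong (SPR.add e f) (SPR.add f e)
  | add_assoc (e f g : SPR A) : cong (SPR.add e (SPR.add f g)) (SPR.add (SPR.add e f) g)
  | distrib (e f g : SPR A) :
      cong (SPR.seq (SPR.add e f) g) (SPR.add (SPR.seq e g) (SPR.seq f g))
  | refl (e : SPR A) : cong e e
  | symm {e f : SPR A} : cong e f → cong f e
  | trans {e f g : SPR A} : cong e f → cong f g → cong e g
  | add_congr {e e' f f' : SPR A} :
      cong e e' → cong f f' → cong (SPR.add e f) (SPR.add e' f')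
  | seq_congr {e e' f f' : SPR A} :
      cong e e' → cong f f' → cong (SPR.seq e f) (SPR.seq e' f')
  | par_congr {e e' f f' : SPR A} :
      cong e e' → cong f f' → cong (SPR.par e f) (SPR.par e' f')
  | star_congr {e e' : SPR A} : cong e e' → cong (SPR.star e) (SPR.star e')
  | dagger_congr {e e' : SPR A} : cong e e' → cong (SPR.dagger e) (SPR.dagger e')

/-- `e ⋆ f`: `f` if `e` is nullable, `0` otherwise. -/
def estar {A : Type} (e f : SPR A) : SPR A := if Null e then f else SPR.zero

/-- `e ⨟ f`: `0` if `e ≃ 0`, `e · f` otherwise. -/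
def eseq {A : Type} (e f : SPR A) : SPR A :=
  if cong e SPR.zero then SPR.zero else SPR.seq e f

/-- The Brzozowski-style sequential derivative δ_Σ. -/
def dseq {A : Type} : SPR A → A → SPR A
  | SPR.zero, _ => SPR.zero
  | SPR.one, _ => SPR.zero
  | SPR.var b, a => if a = b then SPR.one else SPR.zero
  | SPR.add e f, a => SPR.add (dseq e a) (dseq f a)
  | SPR.seq e f, a => SPR.add (eseq (dseq e a) f) (estar e (dseq f a))
  | SPR.par _ _, _ => SPR.zero
  | SPR.star e, a => eseq (dseq e a) (SPR.star e)
  | SPR.dagger _, _ => SPR.zero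

/-- The Brzozowski-style parallel derivative γ_Σ. -/
def dgam {A : Type} : SPR A → SPR A → SPR A → SPR A
  | SPR.zero, _, _ => SPR.zero
  | SPR.one, _, _ => SPR.zero
  | SPR.var _, _, _ => SPR.zero
  | SPR.add e f, g, h => SPR.add (dgam e g h) (dgam f g h)
  | SPR.seq e f, g, h => SPR.add (eseq (dgam e g h) f) (estar e (dgam f g h))
  | SPR.par e f, g, h => if cong g e ∧ cong h f then SPR.one else SPR.zero
  | SPR.star e, g, h => eseq (dgam e g h) (SPR.star e)
  | SPR.dagger e, g, h =>
      if cong g e ∧ cong h (SPR.dagger e) then SPR.one else SPR.zero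

/-- The trace dependency preorder ⪯_Σ of the syntactic pomset automaton
(on raw expressions, compatible with the congruence ≃). -/
inductive dleq {A : Type} : SPR A → SPR A → Prop where
  | refl (e : SPR A) : dleq e e
  | trans {e f g : SPR A} : dleq e f → dleq f g → dleq e g
  | congr {e f : SPR A} : cong e f → dleq e f
  | delta (e : SPR A) (a : A) : dleq (dseq e a) e
  | gamma (e g h : SPR A) : dleq (dgam e g h) e
  | forkL {e g h : SPR A} : ¬ cong (dgam e g h) SPR.zero → dleq g e
  | forkR {e g h : SPR A} : ¬ cong (dgam e g h) SPR.zero → dleq h e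

/-- Maximal nesting of parallel composition in an expression. -/
def dpar {A : Type} : SPR A → ℕ
  | SPR.zero => 0
  | SPR.one => 0
  | SPR.var _ => 0
  | SPR.add e f => max (dpar e) (dpar f)
  | SPR.seq e f => max (dpar e) (dpar f)
  | SPR.par e f => max (dpar e) (dpar f) + 1
  | SPR.star e => dpar e
  | SPR.dagger e => dpar e

/-- Maximal nesting of the parallel star in an expression. -/
def ddag {A : Type} : SPR A → ℕ
  | SPR.zero => 0
  | SPR.one => 0
  | SPR.var _ => 0
  | SPR.add e f => max (ddag e) (ddag f)
  | SPR.seq e f => max (ddag e) (ddag f)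
  | SPR.par e f => max (ddag e) (ddag f)
  | SPR.star e => ddag e
  | SPR.dagger e => ddag e + 1

section Aux

variable {A : Type}

/-! ### Null lemmas -/

@[simp] lemma null_zero_iff : Null (SPR.zero : SPR A) ↔ False := by
  constructor <;> intro h <;> cases h

@[simp] lemma null_one_iff : Null (SPR.one : SPR A) ↔ True := by
  simp [Null.one]

@[simp] lemma null_var_iff (a : A) : Null (SPR.var a) ↔ False := by
  constructor <;> intro h <;> cases h

@[simp] lemma null_add_iff (e f : SPR A) : Null (SPR.add e f) ↔ Null e ∨ Null f := by
  constructor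
  · intro h; cases h with
    | addL _ h => exact Or.inl h
    | addR _ h => exact Or.inr h
  · rintro (h | h)
    · exact Null.addL _ h
    · exact Null.addR _ h

@[simp] lemma null_seq_iff (e f : SPR A) : Null (SPR.seq e f) ↔ Null e ∧ Null f := by
  constructor
  · intro h; cases h with
    | seq h1 h2 => exact ⟨h1, h2⟩
  · rintro ⟨h1, h2⟩; exact Null.seq h1 h2

@[simp] lemma null_par_iff (e f : SPR A) : Null (SPR.par e f) ↔ Null e ∧ Null f := by
  constructor
  · intro h; cases h with
    | par h1 h2 => exact ⟨h1, h2⟩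
  · rintro ⟨h1, h2⟩; exact Null.par h1 h2

@[simp] lemma null_star_iff (e : SPR A) : Null (SPR.star e) ↔ True := by
  simp [Null.star]

@[simp] lemma null_dagger_iff (e : SPR A) : Null (SPR.dagger e) ↔ True := by
  simp [Null.dagger]

lemma cong_null {x y : SPR A} (h : cong x y) : Null x ↔ Null y := by
  induction h with
  | add_zero e => simp
  | add_idem e => simp
  | add_comm e f => simp; tauto
  | add_assoc e f g => simp; tauto
  | distrib e f g => simp; tauto
  | refl e => rfl
  | symm _ ih => exact ih.symm
  | trans _ _ ih1 ih2 => exact ih1.trans ih2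
  | add_congr _ _ ih1 ih2 => simp [ih1, ih2]
  | seq_congr _ _ ih1 ih2 => simp [ih1, ih2]
  | par_congr _ _ ih1 ih2 => simp [ih1, ih2]
  | star_congr _ _ => simp
  | dagger_congr _ _ => simp

/-! ### cong preserves the measures -/

lemma cong_dpar {x y : SPR A} (h : cong x y) : dpar x = dpar y := by
  induction h with
  | add_zero e => simp [dpar]
  | add_idem e => simp [dpar]
  | add_comm e f => simp [dpar]; omega
  | add_assoc e f g => simp [dpar]
  | distrib e f g => simp [dpar]
  | refl e => rfl
  | symm _ ih => exact ih.symm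
  | trans _ _ ih1 ih2 => exact ih1.trans ih2
  | add_congr _ _ ih1 ih2 => simp [dpar, ih1, ih2]
  | seq_congr _ _ ih1 ih2 => simp [dpar, ih1, ih2]
  | par_congr _ _ ih1 ih2 => simp [dpar, ih1, ih2]
  | star_congr _ ih => simp [dpar, ih]
  | dagger_congr _ ih => simp [dpar, ih]

lemma cong_ddag {x y : SPR A} (h : cong x y) : ddag x = ddag y := by
  induction h with
  | add_zero e => simp [ddag]
  | add_idem e => simp [ddag]
  | add_comm e f => simp [ddag]; omega
  | add_assoc e f g => simp [ddag]
  | distrib e f g => simp [ddag]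
  | refl e => rfl
  | symm _ ih => exact ih.symm
  | trans _ _ ih1 ih2 => exact ih1.trans ih2
  | add_congr _ _ ih1 ih2 => simp [ddag, ih1, ih2]
  | seq_congr _ _ ih1 ih2 => simp [ddag, ih1, ih2]
  | par_congr _ _ ih1 ih2 => simp [ddag, ih1, ih2]
  | star_congr _ ih => simp [ddag, ih]
  | dagger_congr _ ih => simp [ddag, ih]

/-! ### The congruence class of zero -/

def isz {A : Type} : SPR A → Prop
  | SPR.zero => True
  | SPR.add e f => isz e ∧ isz f
  | _ => False

lemma cong_isz {x y : SPR A} (h : cong x y) : isz x ↔ isz y := by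
  induction h with
  | add_zero e => simp [isz]
  | add_idem e => simp only [isz]; tauto
  | add_comm e f => simp only [isz]; tauto
  | add_assoc e f g => simp only [isz]; tauto
  | distrib e f g => simp [isz]
  | refl e => rfl
  | symm _ ih => exact ih.symm
  | trans _ _ ih1 ih2 => exact ih1.trans ih2
  | add_congr _ _ ih1 ih2 => simp [isz, ih1, ih2]
  | seq_congr _ _ _ _ => simp [isz]
  | par_congr _ _ _ _ => simp [isz]
  | star_congr _ _ => simp [isz]
  | dagger_congr _ _ => simp [isz]

lemma isz_cong {x : SPR A} (h : isz x) : cong x SPR.zero := by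
  induction x with
  | zero => exact cong.refl _
  | add e f ih1 ih2 =>
      exact cong.trans (cong.add_congr (ih1 h.1) (ih2 h.2)) (cong.add_idem _)
  | one => exact absurd h (by simp [isz])
  | var a => exact absurd h (by simp [isz])
  | seq e f _ _ => exact absurd h (by simp [isz])
  | par e f _ _ => exact absurd h (by simp [isz])
  | star e _ => exact absurd h (by simp [isz])
  | dagger e _ => exact absurd h (by simp [isz])

lemma cong_zero_isz {x : SPR A} (h : cong x SPR.zero) : isz x :=
  (cong_isz h).mpr trivial

/-! ### small ACI toolkit -/

lemma cg_zero_add (y : SPR A) : cong (SPR.add SPR.zero y) y :=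
  cong.trans (cong.add_comm _ _) (cong.add_zero y)

lemma cg_swap (a b c d : SPR A) :
    cong (SPR.add (SPR.add a b) (SPR.add c d)) (SPR.add (SPR.add a c) (SPR.add b d)) := by
  refine cong.trans (cong.symm (cong.add_assoc a b (SPR.add c d))) ?_
  refine cong.trans (cong.add_congr (cong.refl a) (cong.add_assoc b c d)) ?_
  refine cong.trans (cong.add_congr (cong.refl a)
    (cong.add_congr (cong.add_comm b c) (cong.refl d))) ?_
  refine cong.trans (cong.add_congr (cong.refl a) (cong.symm (cong.add_assoc c b d))) ?_
  exact cong.add_assoc a c (SPR.add b d)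

/-! ### eseq / estar congruence lemmas -/

lemma eseq_congr {x x' f f' : SPR A} (hx : cong x x') (hf : cong f f') :
    cong (eseq x f) (eseq x' f') := by
  by_cases h : cong x SPR.zero
  · have h' : cong x' SPR.zero := cong.trans (cong.symm hx) h
    simp [eseq, h, h']
    exact cong.refl _
  · have h' : ¬ cong x' SPR.zero := fun hc => h (cong.trans hx hc)
    simp [eseq, h, h']
    exact cong.seq_congr hx hf

lemma estar_congr {e e' x x' : SPR A} (he : cong e e') (hx : cong x x') :
    cong (estar e x) (estar e' x') := by
  by_cases h : Null e
  · have h' : Null e' := (cong_null he).mp h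
    simp [estar, h, h']; exact hx
  · have h' : ¬ Null e' := fun hc => h ((cong_null he).mpr hc)
    simp [estar, h, h']; exact cong.refl _

lemma eseq_add (x y f : SPR A) :
    cong (eseq (SPR.add x y) f) (SPR.add (eseq x f) (eseq y f)) := by
  by_cases hx : cong x SPR.zero <;> by_cases hy : cong y SPR.zero
  · have hxy : cong (SPR.add x y) SPR.zero :=
      cong.trans (cong.add_congr hx hy) (cong.add_idem _)
    simp [eseq, hx, hy, hxy]
    exact cong.symm (cong.add_idem _)
  · have hxy : ¬ cong (SPR.add x y) SPR.zero := fun h =>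
      hy (isz_cong (cong_zero_isz h).2)
    simp [eseq, hx, hy, hxy]
    refine cong.trans (cong.seq_congr (cong.trans (cong.add_congr hx (cong.refl y))
      (cg_zero_add y)) (cong.refl f)) ?_
    exact cong.symm (cg_zero_add _)
  · have hxy : ¬ cong (SPR.add x y) SPR.zero := fun h =>
      hx (isz_cong (cong_zero_isz h).1)
    simp [eseq, hx, hy, hxy]
    refine cong.trans (cong.seq_congr (cong.trans (cong.add_congr (cong.refl x) hy)
      (cong.add_zero x)) (cong.refl f)) ?_
    exact cong.symm (cong.add_zero _)
  · have hxy : ¬ cong (SPR.add x y) SPR.zero := fun h =>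
      hx (isz_cong (cong_zero_isz h).1)
    simp [eseq, hx, hy, hxy]
    exact cong.distrib x y f

lemma estar_add (e f x : SPR A) :
    cong (estar (SPR.add e f) x) (SPR.add (estar e x) (estar f x)) := by
  by_cases he : Null e <;> by_cases hf : Null f <;>
    simp [estar, he, hf]
  · exact cong.symm (cong.add_idem x)
  · exact cong.symm (cong.add_zero x)
  · exact cong.symm (cg_zero_add x)
  · exact cong.symm (cong.add_idem _)

/-! ### derivatives are compatible with the congruence -/

lemma dseq_congr {x y : SPR A} (h : cong x y) (a : A) :
    cong (dseq x a) (dseq y a) := by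
  induction h with
  | add_zero e => exact cong.add_zero _
  | add_idem e => exact cong.add_idem _
  | add_comm e f => exact cong.add_comm _ _
  | add_assoc e f g => exact cong.add_assoc _ _ _
  | distrib e f g =>
      simp only [dseq]
      exact cong.trans (cong.add_congr (eseq_add _ _ _) (estar_add _ _ _))
        (cg_swap _ _ _ _)
  | refl e => exact cong.refl _
  | symm _ ih => exact cong.symm ih
  | trans _ _ ih1 ih2 => exact cong.trans ih1 ih2
  | add_congr _ _ ih1 ih2 => exact cong.add_congr ih1 ih2
  | seq_congr h1 h2 ih1 ih2 =>
      exact cong.add_congr (eseq_congr ih1 h2) (estar_congr h1 ih2)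
  | par_congr _ _ _ _ => exact cong.refl _
  | star_congr h ih => exact eseq_congr ih (cong.star_congr h)
  | dagger_congr _ _ => exact cong.refl _

lemma dgam_congr {x y : SPR A} (h : cong x y) (g k : SPR A) :
    cong (dgam x g k) (dgam y g k) := by
  induction h with
  | add_zero e => exact cong.add_zero _
  | add_idem e => exact cong.add_idem _
  | add_comm e f => exact cong.add_comm _ _
  | add_assoc e f g => exact cong.add_assoc _ _ _
  | distrib e f g =>
      simp only [dgam]
      exact cong.trans (cong.add_congr (eseq_add _ _ _) (estar_add _ _ _))
        (cg_swap _ _ _ _)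
  | refl e => exact cong.refl _
  | symm _ ih => exact cong.symm ih
  | trans _ _ ih1 ih2 => exact cong.trans ih1 ih2
  | add_congr _ _ ih1 ih2 => exact cong.add_congr ih1 ih2
  | seq_congr h1 h2 ih1 ih2 =>
      exact cong.add_congr (eseq_congr ih1 h2) (estar_congr h1 ih2)
  | par_congr h1 h2 ih1 ih2 =>
      rename_i e e' f f'
      by_cases c : cong g e ∧ cong k f
      · have c' : cong g e' ∧ cong k f' := ⟨cong.trans c.1 h1, cong.trans c.2 h2⟩
        simp only [dgam, if_pos c, if_pos c']; exact cong.refl _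
      · have c' : ¬ (cong g e' ∧ cong k f') := fun hc =>
          c ⟨cong.trans hc.1 (cong.symm h1), cong.trans hc.2 (cong.symm h2)⟩
        simp only [dgam, if_neg c, if_neg c']; exact cong.refl _
  | star_congr h ih => exact eseq_congr ih (cong.star_congr h)
  | dagger_congr h ih =>
      rename_i e e'
      by_cases c : cong g e ∧ cong k (SPR.dagger e)
      · have c' : cong g e' ∧ cong k (SPR.dagger e') :=
          ⟨cong.trans c.1 h, cong.trans c.2 (cong.dagger_congr h)⟩
        simp only [dgam, if_pos c, if_pos c']; exact cong.refl _
      · have c' : ¬ (cong g e' ∧ cong k (SPR.dagger e')) := fun hc =>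
          c ⟨cong.trans hc.1 (cong.symm h),
            cong.trans hc.2 (cong.dagger_congr (cong.symm h))⟩
        simp only [dgam, if_neg c, if_neg c']; exact cong.refl _

/-! ### measure bounds for the derivatives -/

lemma eseq_dpar (x f : SPR A) : dpar (eseq x f) ≤ max (dpar x) (dpar f) := by
  unfold eseq; split <;> simp [dpar]

lemma eseq_ddag (x f : SPR A) : ddag (eseq x f) ≤ max (ddag x) (ddag f) := by
  unfold eseq; split <;> simp [ddag]

lemma estar_dpar (e x : SPR A) : dpar (estar e x) ≤ dpar x := by
  unfold estar; split <;> simp [dpar]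

lemma estar_ddag (e x : SPR A) : ddag (estar e x) ≤ ddag x := by
  unfold estar; split <;> simp [ddag]

lemma dseq_dpar (e : SPR A) (a : A) : dpar (dseq e a) ≤ dpar e := by
  induction e with
  | zero => simp [dseq, dpar]
  | one => simp [dseq, dpar]
  | var b => simp only [dseq]; split <;> simp [dpar]
  | add e f ihe ihf => simp only [dseq, dpar]; omega
  | seq e f ihe ihf =>
      have h1 := eseq_dpar (dseq e a) f
      have h2 := estar_dpar e (dseq f a)
      simp only [dseq, dpar] at *; omega
  | par e f _ _ => simp [dseq, dpar]
  | star e ih =>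
      have h1 := eseq_dpar (dseq e a) (SPR.star e)
      simp only [dseq, dpar] at *; omega
  | dagger e _ => simp [dseq, dpar]

lemma dseq_ddag (e : SPR A) (a : A) : ddag (dseq e a) ≤ ddag e := by
  induction e with
  | zero => simp [dseq, ddag]
  | one => simp [dseq, ddag]
  | var b => simp only [dseq]; split <;> simp [ddag]
  | add e f ihe ihf => simp only [dseq, ddag]; omega
  | seq e f ihe ihf =>
      have h1 := eseq_ddag (dseq e a) f
      have h2 := estar_ddag e (dseq f a)
      simp only [dseq, ddag] at *; omega
  | par e f _ _ => simp [dseq, ddag]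
  | star e ih =>
      have h1 := eseq_ddag (dseq e a) (SPR.star e)
      simp only [dseq, ddag] at *; omega
  | dagger e _ => simp [dseq, ddag]

lemma dgam_dpar (e g k : SPR A) : dpar (dgam e g k) ≤ dpar e := by
  induction e with
  | zero => simp [dgam, dpar]
  | one => simp [dgam, dpar]
  | var b => simp [dgam, dpar]
  | add e f ihe ihf => simp only [dgam, dpar]; omega
  | seq e f ihe ihf =>
      have h1 := eseq_dpar (dgam e g k) f
      have h2 := estar_dpar e (dgam f g k)
      simp only [dgam, dpar] at *; omega
  | par e f _ _ => simp only [dgam]; split <;> simp [dpar]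
  | star e ih =>
      have h1 := eseq_dpar (dgam e g k) (SPR.star e)
      simp only [dgam, dpar] at *; omega
  | dagger e _ => simp only [dgam]; split <;> simp [dpar]

lemma dgam_ddag (e g k : SPR A) : ddag (dgam e g k) ≤ ddag e := by
  induction e with
  | zero => simp [dgam, ddag]
  | one => simp [dgam, ddag]
  | var b => simp [dgam, ddag]
  | add e f ihe ihf => simp only [dgam, ddag]; omega
  | seq e f ihe ihf =>
      have h1 := eseq_ddag (dgam e g k) f
      have h2 := estar_ddag e (dgam f g k)
      simp only [dgam, ddag] at *; omega
  | par e f _ _ => simp only [dgam]; split <;> simp [ddag]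
  | star e ih =>
      have h1 := eseq_ddag (dgam e g k) (SPR.star e)
      simp only [dgam, ddag] at *; omega
  | dagger e _ => simp only [dgam]; split <;> simp [ddag]

/-! ### non-zeroness decompositions -/

lemma add_nz {x y : SPR A} (h : ¬ cong (SPR.add x y) SPR.zero) :
    ¬ cong x SPR.zero ∨ ¬ cong y SPR.zero := by
  by_contra hc
  push_neg at hc
  exact h (cong.trans (cong.add_congr hc.1 hc.2) (cong.add_idem _))

lemma eseq_nz {x f : SPR A} (h : ¬ cong (eseq x f) SPR.zero) : ¬ cong x SPR.zero := by
  intro hx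
  apply h
  simp [eseq, hx]
  exact cong.refl _

lemma estar_nz {e x : SPR A} (h : ¬ cong (estar e x) SPR.zero) : ¬ cong x SPR.zero := by
  intro hx
  apply h
  unfold estar
  split
  · exact hx
  · exact cong.refl _

/-! ### The fork bounds -/

lemma gam_bounds {e g h : SPR A} (hne : ¬ cong (dgam e g h) SPR.zero) :
    dpar g ≤ dpar e ∧ ddag g ≤ ddag e ∧ dpar g + ddag g < dpar e + ddag e ∧
    dpar h ≤ dpar e ∧ ddag h ≤ ddag e ∧
      (dpar h + ddag h < dpar e + ddag e ∨
        ∃ f : SPR A, cong h (SPR.dagger f) ∧ ddag f + 1 ≤ ddag e) := by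
  induction e with
  | zero => exact absurd (cong.refl _) hne
  | one => exact absurd (cong.refl _) hne
  | var b => exact absurd (cong.refl _) hne
  | add e1 e2 ih1 ih2 =>
      simp only [dgam] at hne
      rcases add_nz hne with h1 | h2
      · obtain ⟨a1, a2, a3, a4, a5, a6⟩ := ih1 h1
        simp only [dpar, ddag]
        refine ⟨by omega, by omega, by omega, by omega, by omega, ?_⟩
        rcases a6 with hlt | ⟨f, hf, hd⟩
        · exact Or.inl (by omega)
        · exact Or.inr ⟨f, hf, by omega⟩
      · obtain ⟨a1, a2, a3, a4, a5, a6⟩ := ih2 h2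
        simp only [dpar, ddag]
        refine ⟨by omega, by omega, by omega, by omega, by omega, ?_⟩
        rcases a6 with hlt | ⟨f, hf, hd⟩
        · exact Or.inl (by omega)
        · exact Or.inr ⟨f, hf, by omega⟩
  | seq e1 e2 ih1 ih2 =>
      simp only [dgam] at hne
      rcases add_nz hne with h1 | h2
      · obtain ⟨a1, a2, a3, a4, a5, a6⟩ := ih1 (eseq_nz h1)
        simp only [dpar, ddag]
        refine ⟨by omega, by omega, by omega, by omega, by omega, ?_⟩
        rcases a6 with hlt | ⟨f, hf, hd⟩
        · exact Or.inl (by omega)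
        · exact Or.inr ⟨f, hf, by omega⟩
      · obtain ⟨a1, a2, a3, a4, a5, a6⟩ := ih2 (estar_nz h2)
        simp only [dpar, ddag]
        refine ⟨by omega, by omega, by omega, by omega, by omega, ?_⟩
        rcases a6 with hlt | ⟨f, hf, hd⟩
        · exact Or.inl (by omega)
        · exact Or.inr ⟨f, hf, by omega⟩
  | par e1 e2 _ _ =>
      by_cases c : cong g e1 ∧ cong h e2
      · have b1 := cong_dpar c.1
        have b2 := cong_ddag c.1
        have b3 := cong_dpar c.2
        have b4 := cong_ddag c.2
        simp only [dpar, ddag]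
        refine ⟨by omega, by omega, by omega, by omega, by omega, Or.inl (by omega)⟩
      · simp only [dgam, if_neg c] at hne
        exact absurd (cong.refl _) hne
  | star e1 ih =>
      simp only [dgam] at hne
      obtain ⟨a1, a2, a3, a4, a5, a6⟩ := ih (eseq_nz hne)
      simp only [dpar, ddag]
      exact ⟨a1, a2, a3, a4, a5, a6⟩
  | dagger e1 _ =>
      by_cases c : cong g e1 ∧ cong h (SPR.dagger e1)
      · have b1 := cong_dpar c.1
        have b2 := cong_ddag c.1
        have b3 := cong_dpar c.2
        have b4 := cong_ddag c.2
        simp only [dpar, ddag] at *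
        refine ⟨by omega, by omega, by omega, by omega, by omega,
          Or.inr ⟨e1, c.2, by omega⟩⟩
      · simp only [dgam, if_neg c] at hne
        exact absurd (cong.refl _) hne

/-! ### monotonicity of the measures along ⪯ -/

lemma dleq_mono {x y : SPR A} (h : dleq x y) : dpar x ≤ dpar y ∧ ddag x ≤ ddag y := by
  induction h with
  | refl e => exact ⟨le_refl _, le_refl _⟩
  | trans _ _ ih1 ih2 => exact ⟨ih1.1.trans ih2.1, ih1.2.trans ih2.2⟩
  | congr h => exact ⟨(cong_dpar h).le, (cong_ddag h).le⟩
  | delta e a => exact ⟨dseq_dpar e a, dseq_ddag e a⟩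
  | gamma e g h => exact ⟨dgam_dpar e g h, dgam_ddag e g h⟩
  | forkL hne =>
      obtain ⟨a1, a2, _⟩ := gam_bounds hne
      exact ⟨a1, a2⟩
  | forkR hne =>
      obtain ⟨_, _, _, a4, a5, _⟩ := gam_bounds hne
      exact ⟨a4, a5⟩

/-! ### descending to a dagger -/

lemma dleq_dagger_aux {x y : SPR A} (h : dleq x y) :
    ∀ f : SPR A, cong y (SPR.dagger f) → ddag f + 1 ≤ ddag x → cong x (SPR.dagger f) := by
  induction h with
  | refl e => exact fun f hy _ => hy
  | trans h1 h2 ih1 ih2 =>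
      intro f hy hx
      exact ih1 f (ih2 f hy (le_trans hx (dleq_mono h1).2)) hx
  | congr h => exact fun f hy _ => cong.trans h hy
  | delta e a =>
      intro f hy hx
      have hz : cong (dseq e a) SPR.zero := by
        simpa [dseq] using dseq_congr hy a
      exfalso
      have := cong_ddag hz
      simp [ddag] at this
      omega
  | gamma e g k =>
      intro f hy hx
      have hc := dgam_congr hy g k
      by_cases c : cong g f ∧ cong k (SPR.dagger f)
      · have hone : cong (dgam e g k) SPR.one := by
          simpa only [dgam, if_pos c] using hc
        have := cong_ddag hone
        exfalso
        simp [ddag] at this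
        omega
      · have hzero : cong (dgam e g k) SPR.zero := by
          simpa only [dgam, if_neg c] using hc
        have := cong_ddag hzero
        exfalso
        simp [ddag] at this
        omega
  | forkL hne =>
      intro f hy hx
      rename_i e g k
      have hc := dgam_congr hy g k
      by_cases c : cong g f ∧ cong k (SPR.dagger f)
      · exfalso
        have := cong_ddag c.1
        omega
      · exact absurd (by simpa only [dgam, if_neg c] using hc) hne
  | forkR hne =>
      intro f hy hx
      rename_i e g k
      have hc := dgam_congr hy g k
      by_cases c : cong g f ∧ cong k (SPR.dagger f)
      · exact c.2
      · exact absurd (by simpa only [dgam, if_neg c] using hc) hne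

end Aux

/-- If the parallel derivative γ_Σ(e,g,h) is non-zero, then `g` is strictly below
`e`, and either `h` is strictly below `e` or `e` is congruent to a parallel star. -/
theorem dgam_strict {A : Type} {e g h : SPR A}
    (hne : ¬ cong (dgam e g h) SPR.zero) :
    (dleq g e ∧ ¬ dleq e g) ∧
      ((dleq h e ∧ ¬ dleq e h) ∨ ∃ f : SPR A, cong e (SPR.dagger f)) := by
  obtain ⟨hg1, hg2, hg3, hh1, hh2, hh6⟩ := gam_bounds hne
  constructor
  · refine ⟨dleq.forkL hne, fun hle => ?_⟩
    have := dleq_mono hle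
    omega
  · by_cases heh : dleq e h
    · rcases hh6 with hlt | ⟨f, hf, hd⟩
      · exfalso
        have := dleq_mono heh
        omega
      · exact Or.inr ⟨f, dleq_dagger_aux heh f hf hd⟩
    · exact Or.inl ⟨dleq.forkR hne, heh⟩
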